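/- Let (Ω, F, P) be a probability space, n ∈ ℕ, h > 0, and let ξ₀, …, ξ_{n−1} : Ω → ℝ be an independent family of square-integrable random variables with E[ξᵢ] = 0 and E[ξᵢ²] = h for every i. For each i, let Zᵢ : Ω → ℝ be square-integrable and measurable with respect to σ(ξ₀, …, ξ_{i−1}), and let A : Ω → ℝ be square-integrable. Then for every ε > 0, Var( A + Σ_{i=0}^{n−1} Zᵢ·ξᵢ ) ≥ (1 − ε)·h·Σ_{i=0}^{n−1} E[Zᵢ²] − (1/ε)·E[A²]. -/

import Mathlib

open MeasureTheory ProbabilityTheory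

section Aux
set_option linter.unusedSectionVars false
variable {Ω : Type*} [mΩ : MeasurableSpace Ω] {P : Measure Ω} [IsProbabilityMeasure P]

lemma aux_indep_mono {m₁ m₂ m₁' m₂' : MeasurableSpace Ω} (hi : Indep m₁ m₂ P)
    (h1 : m₁' ≤ m₁) (h2 : m₂' ≤ m₂) : Indep m₁' m₂' P := by
  rw [Indep_iff] at hi ⊢
  exact fun t1 t2 ht1 ht2 => hi t1 t2 (h1 _ ht1) (h2 _ ht2)

lemma aux_indepFun {β γ : Type*} [MeasurableSpace β] [MeasurableSpace γ]
    {m₁ m₂ : MeasurableSpace Ω} (hi : Indep m₁ m₂ P)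
    {f : Ω → β} {g : Ω → γ} (hf : Measurable[m₁] f) (hg : Measurable[m₂] g) :
    IndepFun f g P := by
  rw [IndepFun_iff]
  rw [Indep_iff] at hi
  exact fun t1 t2 ht1 ht2 => hi t1 t2 (hf.comap_le _ ht1) (hg.comap_le _ ht2)

lemma aux_int_mul {f g : Ω → ℝ} (hf : MemLp f 2 P) (hg : MemLp g 2 P) :
    Integrable (fun ω => f ω * g ω) P := by
  rw [← memLp_one_iff_integrable]
  have := hg.smul (φ := f) hf (r := 1)
  simpa [smul_eq_mul, Pi.mul_def] using this
end Aux

/-- with independent, square-integrable, mean-zero `ξᵢ` satisfying `E[ξᵢ²] = h`,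
`Zᵢ` square-integrable and measurable w.r.t. `σ(ξ₀, …, ξ_{i−1})`, and `A` square-integrable,
for every `ε > 0`, `Var(A + Σᵢ Zᵢ·ξᵢ) ≥ (1 − ε)·h·Σᵢ E[Zᵢ²] − (1/ε)·E[A²]`. -/
theorem var_lower_bound_discrete_stochastic_integral
    {Ω : Type*} [MeasurableSpace Ω] (P : Measure Ω) [IsProbabilityMeasure P]
    (n : ℕ) (h : ℝ) (hh : 0 < h) (ξ Z : Fin n → Ω → ℝ)
    (hξmeas : ∀ i, Measurable (ξ i))
    (hξindep : iIndepFun ξ P)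
    (hξL2 : ∀ i, MemLp (ξ i) 2 P)
    (hξmean : ∀ i, ∫ ω, ξ i ω ∂P = 0)
    (hξvar : ∀ i, ∫ ω, (ξ i ω) ^ 2 ∂P = h)
    (hZL2 : ∀ i, MemLp (Z i) 2 P)
    (hZmeas : ∀ i : Fin n,
      Measurable[⨆ j : Fin n, ⨆ _ : j < i, MeasurableSpace.comap (ξ j) inferInstance] (Z i))
    (A : Ω → ℝ) (hA : MemLp A 2 P) :
    ∀ ε > 0, variance (fun ω => A ω + ∑ i, Z i ω * ξ i ω) P ≥
      (1 - ε) * h * (∑ i, ∫ ω, (Z i ω) ^ 2 ∂P) - (1 / ε) * (∫ ω, (A ω) ^ 2 ∂P) := by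
  intro ε hε
  set m : Fin n → MeasurableSpace Ω := fun j => MeasurableSpace.comap (ξ j) inferInstance with hm
  set G : Fin n → MeasurableSpace Ω :=
    fun i => ⨆ j : Fin n, ⨆ _ : j < i, m j with hG
  have hmle : ∀ j, m j ≤ ‹MeasurableSpace Ω› := fun j => (hξmeas j).comap_le
  have hGle : ∀ i, G i ≤ ‹MeasurableSpace Ω› := fun i => iSup₂_le fun j _ => hmle j
  have hGmono : ∀ {i j : Fin n}, i ≤ j → G i ≤ G j := by
    intro i j hij
    exact iSup₂_le fun k hk => le_iSup₂ (f := fun k (_ : k < j) => m k) k (lt_of_lt_of_le hk hij)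
  have hind : iIndep m P := by
    rw [iIndepFun_iff_iIndep] at hξindep; exact hξindep
  -- independence of G i and m i
  have hGi : ∀ i, Indep (G i) (m i) P := by
    intro i
    have hd : Disjoint {j : Fin n | j < i} ({i} : Set (Fin n)) := by
      simp only [Set.disjoint_singleton_right, Set.mem_setOf_eq]
      exact lt_irrefl i
    have := indep_iSup_of_disjoint hmle hind hd
    simpa [iSup_singleton] using this
  have hξm : ∀ i, Measurable[m i] (ξ i) := fun i => comap_measurable (ξ i)
  have hZamb : ∀ i, Measurable (Z i) := fun i => (hZmeas i).mono (hGle i) le_rfl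
  have hZξ : ∀ i, IndepFun (Z i) (ξ i) P :=
    fun i => aux_indepFun (hGi i) (hZmeas i) (hξm i)
  -- products are in L²
  have hZξ2 : ∀ i, IndepFun (fun ω => (Z i ω) ^ 2) (fun ω => (ξ i ω) ^ 2) P := by
    intro i
    exact (hZξ i).comp (measurable_id.pow_const 2) (measurable_id.pow_const 2)
  have hsqint : ∀ i, Integrable (fun ω => (Z i ω * ξ i ω) ^ 2) P := by
    intro i
    have := (hZξ2 i).integrable_mul (hZL2 i).integrable_sq (hξL2 i).integrable_sq
    simpa [mul_pow, Pi.mul_def] using this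
  have hTi2 : ∀ i, MemLp (fun ω => Z i ω * ξ i ω) 2 P := by
    intro i
    exact (memLp_two_iff_integrable_sq
      (((hZamb i).mul (hξmeas i)).aestronglyMeasurable)).2 (hsqint i)
  set T : Ω → ℝ := fun ω => ∑ i, Z i ω * ξ i ω with hT
  have hT2 : MemLp T 2 P := by
    have hs := memLp_finsetSum' (μ := P) Finset.univ
      (f := fun (i : Fin n) (ω : Ω) => Z i ω * ξ i ω) (fun i _ => hTi2 i)
    rw [show T = ∑ i : Fin n, (fun ω => Z i ω * ξ i ω) from
      funext fun ω => by simp [Finset.sum_apply, hT]]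
    exact hs
  -- mean of each product is zero
  have hmean0 : ∀ i, ∫ ω, Z i ω * ξ i ω ∂P = 0 := by
    intro i
    have := (hZξ i).integral_mul_eq_mul_integral ((hZL2 i).integrable one_le_two).aestronglyMeasurable
      ((hξL2 i).integrable one_le_two).aestronglyMeasurable
    simpa [Pi.mul_apply, hξmean i] using this
  -- diagonal second moment
  have hdiag : ∀ i, ∫ ω, (Z i ω * ξ i ω) ^ 2 ∂P = (∫ ω, (Z i ω) ^ 2 ∂P) * h := by
    intro i
    have h2 := (hZξ2 i).integral_mul_eq_mul_integral (hZL2 i).integrable_sq.aestronglyMeasurable (hξL2 i).integrable_sq.aestronglyMeasurable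
    rw [show (fun ω => (Z i ω * ξ i ω) ^ 2)
        = ((fun ω => (Z i ω)^2) * fun ω => (ξ i ω)^2) from funext fun ω => by
      simp [mul_pow]]
    rw [h2, hξvar i]
  -- cross terms vanish
  have hcross' : ∀ i j : Fin n, i < j →
      ∫ ω, (Z i ω * ξ i ω) * (Z j ω * ξ j ω) ∂P = 0 := by
    intro i j hij
    set W : Ω → ℝ := fun ω => Z i ω * ξ i ω * Z j ω with hW
    have hWmeas : Measurable[G j] W := by
      have h1 : Measurable[G j] (Z i) := (hZmeas i).mono (hGmono hij.le) le_rfl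
      have h2 : Measurable[G j] (ξ i) :=
        (hξm i).mono (le_iSup₂ (f := fun k (_ : k < j) => m k) i hij) le_rfl
      exact (h1.mul h2).mul (hZmeas j)
    have hWξ : IndepFun W (ξ j) P := aux_indepFun (hGi j) hWmeas (hξm j)
    have hWint : Integrable W P := by
      have := aux_int_mul (hTi2 i) (hZL2 j)
      simpa [hW] using this
    have := hWξ.integral_mul_eq_mul_integral hWint.aestronglyMeasurable ((hξL2 j).integrable one_le_two).aestronglyMeasurable
    simp only [Pi.mul_apply, hξmean j, mul_zero] at this
    rw [show (fun ω => (Z i ω * ξ i ω) * (Z j ω * ξ j ω)) = fun ω => W ω * ξ j ω by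
      funext ω; simp only [hW]; ring]
    exact this
  have hcross : ∀ i j : Fin n, i ≠ j →
      ∫ ω, (Z i ω * ξ i ω) * (Z j ω * ξ j ω) ∂P = 0 := by
    intro i j hij
    rcases hij.lt_or_gt with hlt | hlt
    · exact hcross' i j hlt
    · rw [show (fun ω => (Z i ω * ξ i ω) * (Z j ω * ξ j ω))
        = fun ω => (Z j ω * ξ j ω) * (Z i ω * ξ i ω) by funext ω; ring]
      exact hcross' j i hlt
  -- E[T] = 0
  have hTmean : ∫ ω, T ω ∂P = 0 := by
    rw [hT, integral_finset_sum _ fun i _ => (hTi2 i).integrable one_le_two]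
    simp [hmean0]
  -- E[T²] = h * Σ E[Zᵢ²]
  have hTsq : ∫ ω, (T ω) ^ 2 ∂P = h * ∑ i, ∫ ω, (Z i ω) ^ 2 ∂P := by
    have hexp : (fun ω => (T ω) ^ 2)
        = fun ω => ∑ i, ∑ j, (Z i ω * ξ i ω) * (Z j ω * ξ j ω) := by
      funext ω
      rw [hT]; rw [sq, Finset.sum_mul_sum]
    rw [hexp]
    rw [integral_finset_sum _ fun i _ => integrable_finset_sum _ fun j _ =>
      aux_int_mul (hTi2 i) (hTi2 j)]
    have : ∀ i ∈ Finset.univ, (∫ ω, ∑ j, (Z i ω * ξ i ω) * (Z j ω * ξ j ω) ∂P)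
        = (∫ ω, (Z i ω)^2 ∂P) * h := by
      intro i _
      rw [integral_finset_sum _ fun j _ => aux_int_mul (hTi2 i) (hTi2 j)]
      rw [Finset.sum_eq_single i]
      · rw [← hdiag i]; congr 1; funext ω; ring
      · intro j _ hji; exact hcross i j (Ne.symm hji)
      · intro hni; exact absurd (Finset.mem_univ i) hni
    rw [Finset.sum_congr rfl this, ← Finset.sum_mul, mul_comm]
  -- integrability of A·T
  have hATint : Integrable (fun ω => A ω * T ω) P := aux_int_mul hA hT2
  -- pointwise bound
  have hptwise : ∀ ω, -(ε * (T ω)^2) - (1/ε) * (A ω)^2 ≤ 2 * (A ω * T ω) := by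
    intro ω
    have h3 : (ε * T ω + A ω)^2 / ε = ε * (T ω)^2 + 2*(A ω * T ω) + (1/ε) * (A ω)^2 := by
      field_simp
      ring
    have h4 : 0 ≤ (ε * T ω + A ω)^2 / ε := div_nonneg (sq_nonneg _) hε.le
    rw [h3] at h4
    linarith
  -- integral form of the pointwise bound
  have hint1 : Integrable (fun ω => -(ε * (T ω)^2) - (1/ε)*(A ω)^2) P :=
    (((hT2.integrable_sq).const_mul ε).neg).sub ((hA.integrable_sq).const_mul (1/ε))
  have hint2 : Integrable (fun ω => 2 * (A ω * T ω)) P := hATint.const_mul 2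
  have hlow : -(ε * ∫ ω, (T ω)^2 ∂P) - (1/ε) * (∫ ω, (A ω)^2 ∂P)
      ≤ 2 * ∫ ω, A ω * T ω ∂P := by
    have hmono := integral_mono hint1 hint2 (fun ω => hptwise ω)
    have e : ∫ ω, (-(ε * (T ω)^2) - (1/ε)*(A ω)^2) ∂P
        = (-ε) * (∫ ω, (T ω)^2 ∂P) + (-(1/ε)) * ∫ ω, (A ω)^2 ∂P := by
      rw [show (fun ω => -(ε * (T ω)^2) - (1/ε)*(A ω)^2)
          = fun ω => (-ε) * (T ω)^2 + (-(1/ε)) * (A ω)^2 from funext fun ω => by ring]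
      rw [integral_add ((hT2.integrable_sq).const_mul (-ε))
        ((hA.integrable_sq).const_mul (-(1/ε))), integral_const_mul, integral_const_mul]
    rw [e, integral_const_mul] at hmono
    linarith
  -- variance expansion
  have hpow : ((fun ω => A ω + T ω) ^ 2) = fun ω => (A ω)^2 + (2*(A ω * T ω) + (T ω)^2) := by
    funext ω
    simp only [Pi.pow_apply]
    ring
  have hvar : variance (fun ω => A ω + T ω) P
      = (∫ ω, (A ω)^2 ∂P) + (2*(∫ ω, A ω * T ω ∂P) + ∫ ω, (T ω)^2 ∂P)
        - (∫ ω, A ω ∂P)^2 := by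
    have hX : MemLp (fun ω => A ω + T ω) 2 P := hA.add hT2
    rw [variance_eq_sub hX]
    have e1 : P[(fun ω => A ω + T ω) ^ 2]
        = (∫ ω, (A ω)^2 ∂P) + (2*(∫ ω, A ω * T ω ∂P) + ∫ ω, (T ω)^2 ∂P) := by
      have hi3 : Integrable (fun ω => 2*(A ω * T ω) + (T ω)^2) P :=
        hint2.add hT2.integrable_sq
      rw [hpow, integral_add hA.integrable_sq hi3,
        integral_add hint2 hT2.integrable_sq, integral_const_mul]
    have e2 : P[fun ω => A ω + T ω] = ∫ ω, A ω ∂P := by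
      rw [integral_add (hA.integrable one_le_two) (hT2.integrable one_le_two), hTmean, add_zero]
    rw [e1, e2]
  have hAvar : (∫ ω, A ω ∂P)^2 ≤ ∫ ω, (A ω)^2 ∂P := by
    have h1 := variance_nonneg A P
    rw [variance_eq_sub hA] at h1
    have h2 : P[A ^ 2] = ∫ ω, (A ω)^2 ∂P := by
      congr 1
    linarith [h1, h2 ▸ h1]
  have hgoal : variance (fun ω => A ω + T ω) P
      ≥ (1 - ε) * h * (∑ i, ∫ ω, (Z i ω) ^ 2 ∂P) - (1 / ε) * (∫ ω, (A ω) ^ 2 ∂P) := by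
    rw [hvar, hTsq]
    rw [hTsq] at hlow
    nlinarith [hlow, hAvar]
  exact hgoal
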